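/- arXiv:2010.08347 — 4 statements merged into one kernel-verified Lean document; each statement's English description precedes it below -/
import Mathlib

section
/- In a finite-state Markov chain, almost surely a run eventually enters a bottom strongly connected component and visits every state of that BSCC infinitely often. -/
open MeasureTheory

def Adj {S : Type*} (P : S → S → ℝ) (s t : S) : Prop := 0 < P s t

def StronglyConn {S : Type*} (r : S → S → Prop) (K : Set S) : Prop :=
  K.Nonempty ∧ ∀ s ∈ K, ∀ t ∈ K,
    Relation.ReflTransGen (fun a b => r a b ∧ a ∈ K ∧ b ∈ K) s t

def IsSCC {S : Type*} (r : S → S → Prop) (K : Set S) : Prop :=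
  StronglyConn r K ∧ ∀ K' : Set S, K ⊆ K' → StronglyConn r K' → K' = K

def IsBSCC {S : Type*} (r : S → S → Prop) (K : Set S) : Prop :=
  IsSCC r K ∧ ∀ s ∈ K, ∀ t, r s t → t ∈ K

def Cyl {S : Type*} (w : List S) : Set (ℕ → S) :=
  {ρ | ∀ i : ℕ, ∀ h : i < w.length, ρ i = w.get ⟨i, h⟩}

set_option linter.unusedSectionVars false
set_option maxHeartbeats 1000000

namespace Stmt5Aux

def InfO {S : Type*} (ρ : ℕ → S) (x : S) : Prop := ∀ M, ∃ n ≥ M, ρ n = x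

open Classical in
noncomputable def rcnt {S : Type*} (s : S) (m : ℕ) (ρ : ℕ → S) (n : ℕ) : ℕ :=
  ((Finset.range n).filter (fun i => m ≤ i ∧ ρ i = s)).card

def rdead {S : Type*} (s t : S) (m : ℕ) (ρ : ℕ → S) (n : ℕ) : Prop :=
  ∃ i, i < n ∧ m ≤ i ∧ ρ i = s ∧ ρ (i + 1) = t

def Fset {S : Type*} (s t : S) (m k : ℕ) : Set (ℕ → S) :=
  {ρ | ∃ n, k ≤ rcnt s m ρ n ∧ ¬ rdead s t m ρ n}

variable {S : Type*} {s t : S} {m n k : ℕ} {ρ ρ' : ℕ → S}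

lemma rcnt_zero : rcnt s m ρ 0 = 0 := by simp [rcnt]

lemma rcnt_mono (h : n ≤ k) : rcnt s m ρ n ≤ rcnt s m ρ k := by
  classical
  exact Finset.card_le_card (Finset.filter_subset_filter _ (Finset.range_subset_range.mpr h))

lemma rcnt_succ (hm : m ≤ n) (hs : ρ n = s) : rcnt s m ρ (n + 1) = rcnt s m ρ n + 1 := by
  classical
  unfold rcnt
  rw [Finset.range_add_one, Finset.filter_insert, if_pos ⟨hm, hs⟩,
    Finset.card_insert_of_notMem (by simp)]

lemma rcnt_succ_ne (h : ¬ (m ≤ n ∧ ρ n = s)) : rcnt s m ρ (n + 1) = rcnt s m ρ n := by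
  classical
  unfold rcnt
  rw [Finset.range_add_one, Finset.filter_insert, if_neg h]

lemma rcnt_succ_le : rcnt s m ρ (n + 1) ≤ rcnt s m ρ n + 1 := by
  classical
  by_cases h : m ≤ n ∧ ρ n = s
  · rw [rcnt_succ h.1 h.2]
  · rw [rcnt_succ_ne h]; omega

lemma rcnt_congr (h : ∀ i < n, ρ i = ρ' i) : rcnt s m ρ n = rcnt s m ρ' n := by
  classical
  unfold rcnt
  congr 1
  apply Finset.filter_congr
  intro i hi
  rw [Finset.mem_range] at hi
  simp [h i hi]

lemma rdead_congr (h : ∀ i ≤ n, ρ i = ρ' i) :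
    rdead s t m ρ n ↔ rdead s t m ρ' n := by
  constructor <;> rintro ⟨i, h1, h2, h3, h4⟩ <;> refine ⟨i, h1, h2, ?_, ?_⟩
  · rw [← h i (by omega)]; exact h3
  · rw [← h (i+1) (by omega)]; exact h4
  · rw [h i (by omega)]; exact h3
  · rw [h (i+1) (by omega)]; exact h4

lemma rdead_mono (h : n ≤ k) (hd : rdead s t m ρ n) : rdead s t m ρ k := by
  obtain ⟨i, h1, h2, h3, h4⟩ := hd; exact ⟨i, by omega, h2, h3, h4⟩

-- Cylinder lemmas
lemma mem_cyl_getD {w : List S} (hρ : ρ ∈ Cyl w) {i : ℕ} (hi : i < w.length) (d : S) :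
    ρ i = w.getD i d := by
  rw [hρ i hi, List.get_eq_getElem, List.getD_eq_getElem _ _ hi]

lemma measurableSet_cyl [MeasurableSpace S] [MeasurableSingletonClass S] (w : List S) :
    MeasurableSet (Cyl w) := by
  have : Cyl w = ⋂ i : Fin w.length, (fun ρ : ℕ → S => ρ i) ⁻¹' {w.get i} := by
    ext ρ
    simp only [Cyl, Set.mem_setOf_eq, Set.mem_iInter, Set.mem_preimage, Set.mem_singleton_iff]
    exact ⟨fun h i => h i i.2, fun h i hi => h ⟨i, hi⟩⟩
  rw [this]
  exact MeasurableSet.iInter fun i => (measurable_pi_apply _) (measurableSet_singleton _)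

lemma mem_cyl_ofFn (ρ : ℕ → S) (n : ℕ) : ρ ∈ Cyl (List.ofFn fun i : Fin n => ρ i) := by
  intro i hi
  simp only [List.get_eq_getElem, List.getElem_ofFn]

lemma length_pref (ρ : ℕ → S) (n : ℕ) : (List.ofFn fun i : Fin n => ρ i).length = n := by simp



-- measure section
variable {S : Type*} [Fintype S] [MeasurableSpace S] [MeasurableSingletonClass S]
  {P : S → S → ℝ} {μ : Measure (ℕ → S)}

lemma cyl_extend
    (hMarkov : ∀ (w : List S) (a b : S),
      μ (Cyl (w ++ [a, b])) = μ (Cyl (w ++ [a])) * ENNReal.ofReal (P a b))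
    (v : List S) (hv : v ≠ []) (b : S) :
    μ (Cyl (v ++ [b])) = μ (Cyl v) * ENNReal.ofReal (P (v.getLast hv) b) := by
  have h1 : v.dropLast ++ [v.getLast hv] = v := List.dropLast_append_getLast hv
  have := hMarkov v.dropLast (v.getLast hv) b
  have h2 : v.dropLast ++ [v.getLast hv, b] = v ++ [b] := by
    conv_rhs => rw [← h1]
    simp
  rw [h2, h1] at this
  exact this

lemma sum_ne_ofReal (hnn : ∀ s t, 0 ≤ P s t) (hrow : ∀ s, ∑ t, P s t = 1) (s t : S) :
    ∑' b : {b : S // b ≠ t}, ENNReal.ofReal (P s b) = ENNReal.ofReal (1 - P s t) := by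
  classical
  rw [tsum_fintype]
  have h1 : ∑ b : {b : S // b ≠ t}, ENNReal.ofReal (P s b)
      = ∑ b ∈ Finset.univ.erase t, ENNReal.ofReal (P s b) := by
    rw [Finset.sum_subtype (p := fun b => b ≠ t) (Finset.univ.erase t)
      (fun x => by simp) (fun b => ENNReal.ofReal (P s b))]
  rw [h1, ← ENNReal.ofReal_sum_of_nonneg (fun b _ => hnn s b),
    Finset.sum_erase_eq_sub (Finset.mem_univ t), hrow s]


def VP {S : Type*} (s t : S) (m k : ℕ) (v : List S) : Prop :=
  rcnt s m (fun i => v.getD i s) (v.length - 1) = k - 1 ∧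
  ¬ rdead s t m (fun i => v.getD i s) (v.length - 1) ∧
  m + 1 ≤ v.length ∧ v.getD (v.length - 1) s = s

lemma fset_subset_iUnion {S : Type*} {s t : S} {m k : ℕ} (hk : 1 ≤ k) :
    Fset s t m k ⊆
      ⋃ (v : {v : List S // VP s t m k v}) (b : {b : S // b ≠ t}), Cyl (v.1 ++ [b.1]) := by
  classical
  intro ρ hρ
  obtain ⟨n₁, h1, h2⟩ := hρ
  have hex : ∃ n, k ≤ rcnt s m ρ n := ⟨n₁, h1⟩
  have hfind : k ≤ rcnt s m ρ (Nat.find hex) := Nat.find_spec hex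
  have hle : Nat.find hex ≤ n₁ := Nat.find_min' hex h1
  have hnd : ¬ rdead s t m ρ (Nat.find hex) := fun hd => h2 (rdead_mono hle hd)
  have hpos : 0 < Nat.find hex := by
    rcases Nat.eq_zero_or_pos (Nat.find hex) with h | h
    · rw [h, rcnt_zero] at hfind; omega
    · exact h
  obtain ⟨nn, hnn⟩ : ∃ nn, Nat.find hex = nn + 1 := ⟨Nat.find hex - 1, by omega⟩
  rw [hnn] at hfind hnd
  have hmin : rcnt s m ρ nn < k := by
    have := Nat.find_min hex (m := nn) (by omega)
    omega
  have hstep : m ≤ nn ∧ ρ nn = s := by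
    by_contra hcon
    rw [rcnt_succ_ne hcon] at hfind
    omega
  have hcntnn : rcnt s m ρ nn = k - 1 := by
    rw [rcnt_succ hstep.1 hstep.2] at hfind
    omega
  set v := List.ofFn (fun i : Fin (nn + 1) => ρ i) with hv
  have hvlen : v.length = nn + 1 := by simp [hv]
  have hvmem : ρ ∈ Cyl v := mem_cyl_ofFn ρ (nn + 1)
  have hagree : ∀ i < nn + 1, ρ i = v.getD i s := fun i hi =>
    mem_cyl_getD hvmem (by omega) s
  have hVP : VP s t m k v := by
    refine ⟨?_, ?_, ?_, ?_⟩
    · rw [hvlen]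
      simp only [Nat.add_sub_cancel]
      rw [← rcnt_congr (fun i hi => hagree i (by omega))]
      exact hcntnn
    · rw [hvlen]
      simp only [Nat.add_sub_cancel]
      rw [← rdead_congr (fun i hi => hagree i (by omega))]
      exact fun hd => hnd (rdead_mono (by omega) hd)
    · rw [hvlen]; omega
    · rw [hvlen]
      simp only [Nat.add_sub_cancel]
      rw [← hagree nn (by omega)]
      exact hstep.2
  have hbne : ρ (nn + 1) ≠ t := by
    intro hbt
    exact hnd ⟨nn, by omega, hstep.1, hstep.2, hbt⟩
  have hext : v ++ [ρ (nn + 1)] = List.ofFn (fun i : Fin (nn + 2) => ρ i) := by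
    rw [List.ofFn_succ' (n := nn + 1)]
    simp [hv, List.concat_eq_append, Fin.last]
  refine Set.mem_iUnion.mpr ⟨⟨v, hVP⟩, Set.mem_iUnion.mpr ⟨⟨ρ (nn + 1), hbne⟩, ?_⟩⟩
  rw [hext]
  exact mem_cyl_ofFn ρ (nn + 2)

lemma cyl_subset_fset {S : Type*} {s t : S} {m k : ℕ} {v : List S} (hv : VP s t m k v) :
    Cyl v ⊆ Fset s t m (k - 1) := by
  intro ρ hρ
  obtain ⟨hc, hd, hl, hs⟩ := hv
  have hagree : ∀ i < v.length, ρ i = v.getD i s := fun i hi => mem_cyl_getD hρ hi s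
  refine ⟨v.length - 1, ?_, ?_⟩
  · rw [rcnt_congr (fun i hi => hagree i (by omega))]
    omega
  · rw [rdead_congr (fun i hi => hagree i (by omega))]
    exact hd

lemma vp_aux {S : Type*} {s t : S} {m k : ℕ} {ρ : ℕ → S} (hk : 1 ≤ k)
    {v v' : List S} (h1 : VP s t m k v) (h2 : VP s t m k v')
    (hlen : v.length < v'.length) (hm1 : ρ ∈ Cyl v) (hm2 : ρ ∈ Cyl v') : False := by
  obtain ⟨hc, hd, hl, hs⟩ := h1
  obtain ⟨hc', hd', hl', hs'⟩ := h2
  have hag : ∀ i < v.length, ρ i = v.getD i s := fun i hi => mem_cyl_getD hm1 hi s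
  have hag' : ∀ i < v'.length, ρ i = v'.getD i s := fun i hi => mem_cyl_getD hm2 hi s
  have e1 : rcnt s m ρ (v.length - 1) = k - 1 := by
    rw [rcnt_congr (fun i hi => hag i (by omega))]; exact hc
  have e2 : rcnt s m ρ (v'.length - 1) = k - 1 := by
    rw [rcnt_congr (fun i hi => hag' i (by omega))]; exact hc'
  have hρs : ρ (v.length - 1) = s := by rw [hag (v.length - 1) (by omega)]; exact hs
  have e3 : rcnt s m ρ (v.length - 1 + 1) = k := by
    rw [rcnt_succ (by omega) hρs, e1]; omega
  have : rcnt s m ρ (v.length - 1 + 1) ≤ rcnt s m ρ (v'.length - 1) :=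
    rcnt_mono (by omega)
  omega

lemma vp_eq_of_mem {S : Type*} {ρ : ℕ → S}
    {v v' : List S} (hlen : v.length = v'.length) (hm1 : ρ ∈ Cyl v) (hm2 : ρ ∈ Cyl v') :
    v = v' := by
  apply List.ext_getElem hlen
  intro i hi hi'
  have e1 := hm1 i hi
  have e2 := hm2 i hi'
  rw [List.get_eq_getElem] at e1 e2
  rw [← e1, ← e2]

lemma vp_disjoint {S : Type*} {s t : S} {m k : ℕ} (hk : 1 ≤ k) :
    Pairwise (Function.onFun Disjoint (fun v : {v : List S // VP s t m k v} => Cyl v.1)) := by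
  intro v v' hne
  rw [Function.onFun, Set.disjoint_left]
  intro ρ hm1 hm2
  rcases lt_trichotomy v.1.length v'.1.length with h | h | h
  · exact vp_aux hk v.2 v'.2 h hm1 hm2
  · exact hne (Subtype.ext (vp_eq_of_mem h hm1 hm2))
  · exact vp_aux hk v'.2 v.2 h hm2 hm1

section Measure
variable {S : Type*} [Fintype S] [MeasurableSpace S] [MeasurableSingletonClass S]
  {P : S → S → ℝ} {μ : Measure (ℕ → S)} [IsProbabilityMeasure μ]

lemma fset_succ_le
    (hnn : ∀ s t, 0 ≤ P s t) (hrow : ∀ s, ∑ t, P s t = 1)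
    (hMarkov : ∀ (w : List S) (a b : S),
      μ (Cyl (w ++ [a, b])) = μ (Cyl (w ++ [a])) * ENNReal.ofReal (P a b))
    (s t : S) (m k : ℕ) (hk : 1 ≤ k) :
    μ (Fset s t m k) ≤ ENNReal.ofReal (1 - P s t) * μ (Fset s t m (k - 1)) := by
  have := Fintype.toEncodable S  -- countability hint (unused? keep)
  calc μ (Fset s t m k)
      ≤ μ (⋃ (v : {v : List S // VP s t m k v}) (b : {b : S // b ≠ t}), Cyl (v.1 ++ [b.1])) :=
        measure_mono (fset_subset_iUnion hk)
    _ ≤ ∑' (v : {v : List S // VP s t m k v}), μ (⋃ (b : {b : S // b ≠ t}), Cyl (v.1 ++ [b.1])) :=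
        measure_iUnion_le _
    _ ≤ ∑' (v : {v : List S // VP s t m k v}), ∑' (b : {b : S // b ≠ t}), μ (Cyl (v.1 ++ [b.1])) :=
        ENNReal.tsum_le_tsum (fun v => measure_iUnion_le _)
    _ = ∑' (v : {v : List S // VP s t m k v}), ∑' (b : {b : S // b ≠ t}),
          μ (Cyl v.1) * ENNReal.ofReal (P s b.1) := by
        apply tsum_congr
        intro v
        apply tsum_congr
        intro b
        have hne : v.1 ≠ [] := by
          have := v.2.2.2.1
          intro h
          rw [h] at this
          simp at this
        rw [cyl_extend hMarkov v.1 hne b.1]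
        congr 2
        rw [List.getLast_eq_getElem]
        have := v.2.2.2.2
        have hlen1 : 1 ≤ v.1.length := le_trans (by omega) v.2.2.2.1
        rw [List.getD_eq_getElem _ _ (by omega)] at this
        rw [this]
    _ = ∑' (v : {v : List S // VP s t m k v}), μ (Cyl v.1) * ENNReal.ofReal (1 - P s t) := by
        apply tsum_congr
        intro v
        rw [ENNReal.tsum_mul_left, sum_ne_ofReal hnn hrow s t]
    _ = (∑' (v : {v : List S // VP s t m k v}), μ (Cyl v.1)) * ENNReal.ofReal (1 - P s t) :=
        ENNReal.tsum_mul_right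
    _ ≤ μ (Fset s t m (k - 1)) * ENNReal.ofReal (1 - P s t) := by
        apply mul_le_mul_left
        rw [← measure_iUnion (vp_disjoint hk) (fun v => measurableSet_cyl v.1)]
        exact measure_mono (Set.iUnion_subset fun v => cyl_subset_fset v.2)
    _ = ENNReal.ofReal (1 - P s t) * μ (Fset s t m (k - 1)) := mul_comm _ _

lemma fset_pow_le
    (hnn : ∀ s t, 0 ≤ P s t) (hrow : ∀ s, ∑ t, P s t = 1)
    (hMarkov : ∀ (w : List S) (a b : S),
      μ (Cyl (w ++ [a, b])) = μ (Cyl (w ++ [a])) * ENNReal.ofReal (P a b))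
    (s t : S) (m k : ℕ) :
    μ (Fset s t m k) ≤ ENNReal.ofReal (1 - P s t) ^ k := by
  induction k with
  | zero => simpa using prob_le_one
  | succ n ih =>
    calc μ (Fset s t m (n + 1))
        ≤ ENNReal.ofReal (1 - P s t) * μ (Fset s t m n) := by
          simpa using fset_succ_le hnn hrow hMarkov s t m (n + 1) (by omega)
      _ ≤ ENNReal.ofReal (1 - P s t) * ENNReal.ofReal (1 - P s t) ^ n :=
          mul_le_mul_right ih _
      _ = ENNReal.ofReal (1 - P s t) ^ (n + 1) := (pow_succ' _ _).symm

lemma nn_null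
    (hnn : ∀ s t, 0 ≤ P s t) (hrow : ∀ s, ∑ t, P s t = 1)
    (hMarkov : ∀ (w : List S) (a b : S),
      μ (Cyl (w ++ [a, b])) = μ (Cyl (w ++ [a])) * ENNReal.ofReal (P a b))
    (s t : S) (m : ℕ) (hst : 0 < P s t) :
    μ {ρ : ℕ → S | InfO ρ s ∧ ∀ n ≥ m, ρ n ≠ t} = 0 := by
  have hsub : ∀ k, {ρ : ℕ → S | InfO ρ s ∧ ∀ n ≥ m, ρ n ≠ t} ⊆ Fset s t m k := by
    intro k ρ hρ
    obtain ⟨hio, hnt⟩ := hρ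
    have hnd : ∀ n, ¬ rdead s t m ρ n := by
      rintro n ⟨i, h1, h2, h3, h4⟩
      exact hnt (i + 1) (by omega) h4
    have hcnt : ∀ j, ∃ n, j ≤ rcnt s m ρ n := by
      intro j
      induction j with
      | zero => exact ⟨0, by omega⟩
      | succ j ih =>
        obtain ⟨n, hn⟩ := ih
        obtain ⟨n', hn', hs'⟩ := hio (max n m)
        refine ⟨n' + 1, ?_⟩
        rw [rcnt_succ (le_trans (le_max_right n m) hn') hs']
        have := rcnt_mono (s := s) (m := m) (ρ := ρ) (le_trans (le_max_left n m) hn')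
        omega
    obtain ⟨n, hn⟩ := hcnt k
    exact ⟨n, hn, hnd n⟩
  have hle : ∀ k, μ {ρ : ℕ → S | InfO ρ s ∧ ∀ n ≥ m, ρ n ≠ t}
      ≤ ENNReal.ofReal (1 - P s t) ^ k := fun k =>
    le_trans (measure_mono (hsub k)) (fset_pow_le hnn hrow hMarkov s t m k)
  have hPle1 : P s t ≤ 1 := by
    rw [← hrow s]
    exact Finset.single_le_sum (fun b _ => hnn s b) (Finset.mem_univ t)
  have hq : ENNReal.ofReal (1 - P s t) < 1 := by
    rw [← ENNReal.ofReal_one]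
    exact ENNReal.ofReal_lt_ofReal_iff_of_nonneg (by linarith) |>.mpr (by linarith)
  have htend := ENNReal.tendsto_pow_atTop_nhds_zero_of_lt_one hq
  exact le_antisymm (ge_of_tendsto' htend hle |>.trans (le_refl 0)) zero_le

end Measure


lemma ofFn_snoc {S : Type*} (ρ : ℕ → S) (n : ℕ) :
    (List.ofFn fun i : Fin (n + 1) => ρ i) = (List.ofFn fun i : Fin n => ρ i) ++ [ρ n] := by
  rw [List.ofFn_succ' (n := n)]
  simp [List.concat_eq_append, Fin.last]

section Measure2
variable {S : Type*} [Fintype S] [MeasurableSpace S] [MeasurableSingletonClass S]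
  {P : S → S → ℝ} {μ : Measure (ℕ → S)} [IsProbabilityMeasure μ]

lemma trans_null
    (hMarkov : ∀ (w : List S) (a b : S),
      μ (Cyl (w ++ [a, b])) = μ (Cyl (w ++ [a])) * ENNReal.ofReal (P a b))
    (a b : S) (hab : P a b ≤ 0) (n : ℕ) :
    μ {ρ : ℕ → S | ρ n = a ∧ ρ (n + 1) = b} = 0 := by
  have hsub : {ρ : ℕ → S | ρ n = a ∧ ρ (n + 1) = b} ⊆
      ⋃ (u : Fin n → S), Cyl ((List.ofFn u) ++ [a, b]) := by
    rintro ρ ⟨h1, h2⟩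
    refine Set.mem_iUnion.mpr ⟨fun i => ρ i, ?_⟩
    have heq : (List.ofFn fun i : Fin n => ρ i) ++ [a, b]
        = List.ofFn (fun i : Fin (n + 2) => ρ i) := by
      rw [ofFn_snoc ρ (n + 1), ofFn_snoc ρ n, h1, h2]
      simp
    rw [heq]
    exact mem_cyl_ofFn ρ (n + 2)
  refine le_antisymm (le_trans (measure_mono hsub) (le_trans (measure_iUnion_le _) ?_)) zero_le
  have hz : ∀ u : Fin n → S, μ (Cyl ((List.ofFn u) ++ [a, b])) = 0 := by
    intro u
    rw [hMarkov (List.ofFn u) a b, ENNReal.ofReal_eq_zero.mpr hab, mul_zero]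
  simp [hz]

lemma zset_null
    (hMarkov : ∀ (w : List S) (a b : S),
      μ (Cyl (w ++ [a, b])) = μ (Cyl (w ++ [a])) * ENNReal.ofReal (P a b)) :
    μ {ρ : ℕ → S | ∃ n, ¬ 0 < P (ρ n) (ρ (n + 1))} = 0 := by
  have hsub : {ρ : ℕ → S | ∃ n, ¬ 0 < P (ρ n) (ρ (n + 1))} ⊆
      ⋃ (x : S × S × ℕ), {ρ : ℕ → S | ρ x.2.2 = x.1 ∧ ρ (x.2.2 + 1) = x.2.1 ∧ P x.1 x.2.1 ≤ 0} := by
    rintro ρ ⟨n, hn⟩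
    exact Set.mem_iUnion.mpr ⟨(ρ n, ρ (n + 1), n), rfl, rfl, not_lt.mp hn⟩
  refine le_antisymm (le_trans (measure_mono hsub) (le_trans (measure_iUnion_le _) ?_)) zero_le
  have hz : ∀ x : S × S × ℕ,
      μ {ρ : ℕ → S | ρ x.2.2 = x.1 ∧ ρ (x.2.2 + 1) = x.2.1 ∧ P x.1 x.2.1 ≤ 0} = 0 := by
    rintro ⟨a, b, n⟩
    by_cases hab : P a b ≤ 0
    · refine le_antisymm (le_trans (measure_mono ?_) (le_of_eq (trans_null hMarkov a b hab n))) zero_le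
      rintro ρ ⟨h1, h2, h3⟩
      exact ⟨h1, h2⟩
    · have : {ρ : ℕ → S | ρ n = a ∧ ρ (n + 1) = b ∧ P a b ≤ 0} = ∅ := by
        ext ρ; simp [hab]
      simp only at this ⊢
      rw [this, measure_empty]
  simp [hz]

end Measure2

lemma det {S : Type*} [Fintype S] (P : S → S → ℝ) (ρ : ℕ → S)
    (h1 : ∀ n, 0 < P (ρ n) (ρ (n + 1)))
    (h2 : ∀ a b : S, 0 < P a b → InfO ρ a → InfO ρ b) :
    ∃ B : Set S, IsBSCC (Adj P) B ∧
      ∃ N : ℕ, (∀ n ≥ N, ρ n ∈ B) ∧ ∀ x ∈ B, ∀ m : ℕ, ∃ n ≥ m, ρ n = x := by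
  classical
  set B : Set S := {x | InfO ρ x} with hB
  have hne : B.Nonempty := by
    by_contra hcon
    rw [Set.not_nonempty_iff_eq_empty] at hcon
    have hnot : ∀ x : S, ¬ InfO ρ x := fun x hx =>
      Set.eq_empty_iff_forall_notMem.mp hcon x hx
    have hM : ∀ x : S, ∃ M, ∀ n ≥ M, ρ n ≠ x := by
      intro x
      have := hnot x
      unfold InfO at this
      push_neg at this
      exact this
    choose M hM using hM
    exact hM (ρ (Finset.univ.sup M)) (Finset.univ.sup M)
      (Finset.le_sup (Finset.mem_univ (ρ (Finset.univ.sup M)))) rfl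
  have hclosed : ∀ x ∈ B, ∀ y, Adj P x y → y ∈ B := fun x hx y hxy => h2 x y hxy hx
  have hNex : ∃ N, ∀ n ≥ N, ρ n ∈ B := by
    have hM : ∀ x : S, ∃ M, InfO ρ x ∨ ∀ n ≥ M, ρ n ≠ x := by
      intro x
      by_cases hx : InfO ρ x
      · exact ⟨0, Or.inl hx⟩
      · unfold InfO at hx
        push_neg at hx
        obtain ⟨M, hM⟩ := hx
        exact ⟨M, Or.inr hM⟩
    choose M hM using hM
    refine ⟨Finset.univ.sup M, fun n hn => ?_⟩
    rcases hM (ρ n) with h | h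
    · exact h
    · exact absurd rfl (h n (le_trans (Finset.le_sup (Finset.mem_univ (ρ n))) hn))
  obtain ⟨N, hN⟩ := hNex
  have hchain : ∀ a b : ℕ, N ≤ a → a ≤ b →
      Relation.ReflTransGen (fun x y => Adj P x y ∧ x ∈ B ∧ y ∈ B) (ρ a) (ρ b) := by
    intro a b hNa hab
    induction b, hab using Nat.le_induction with
    | base => exact Relation.ReflTransGen.refl
    | succ b hab ih =>
      exact ih.tail ⟨h1 b, hN b (by omega), hN (b + 1) (by omega)⟩
  have hconn : StronglyConn (Adj P) B := by
    refine ⟨hne, fun x hx y hy => ?_⟩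
    obtain ⟨n, hn, hxn⟩ := hx N
    obtain ⟨n', hn', hyn⟩ := hy n
    rw [← hxn, ← hyn]
    exact hchain n n' hn hn'
  refine ⟨B, ⟨⟨hconn, ?_⟩, hclosed⟩, N, hN, fun x hx m => hx m⟩
  intro K' hBK hK'
  apply Set.Subset.antisymm _ hBK
  intro y hy
  obtain ⟨x₀, hx₀⟩ := hne
  have hreach : ∀ z, Relation.ReflTransGen
      (fun a b => Adj P a b ∧ a ∈ K' ∧ b ∈ K') x₀ z → z ∈ B := by
    intro z hz
    induction hz with
    | refl => exact hx₀
    | tail hpr hstep ih => exact hclosed _ ih _ hstep.1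
  exact hreach y (hK'.2 x₀ (hBK hx₀) y hy)

end Stmt5Aux

open Stmt5Aux

/-- In a finite-state Markov chain, almost surely a run eventually enters a bottom SCC
and visits every state of that BSCC infinitely often. -/
theorem stmt5 {S : Type*} [Fintype S] [MeasurableSpace S] [MeasurableSingletonClass S]
    (P : S → S → ℝ) (hnn : ∀ s t, 0 ≤ P s t) (hrow : ∀ s, ∑ t, P s t = 1)
    (μ : Measure (ℕ → S)) [IsProbabilityMeasure μ]
    (hMarkov : ∀ (w : List S) (a b : S),
      μ (Cyl (w ++ [a, b])) = μ (Cyl (w ++ [a])) * ENNReal.ofReal (P a b)) :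
    μ {ρ | ∃ B : Set S, IsBSCC (Adj P) B ∧
        ∃ N : ℕ, (∀ n ≥ N, ρ n ∈ B) ∧ ∀ s ∈ B, ∀ m : ℕ, ∃ n ≥ m, ρ n = s} = 1 := by
  classical
  set T : Set (ℕ → S) := {ρ | (∀ n, 0 < P (ρ n) (ρ (n + 1))) ∧
    ∀ a b : S, 0 < P a b → InfO ρ a → InfO ρ b} with hT
  have hsub : T ⊆ {ρ | ∃ B : Set S, IsBSCC (Adj P) B ∧
      ∃ N : ℕ, (∀ n ≥ N, ρ n ∈ B) ∧ ∀ s ∈ B, ∀ m : ℕ, ∃ n ≥ m, ρ n = s} :=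
    fun ρ hρ => det P ρ hρ.1 hρ.2
  have hz : μ {ρ : ℕ → S | ∃ n, ¬ 0 < P (ρ n) (ρ (n + 1))} = 0 := zset_null hMarkov
  have hU : μ (⋃ x : S × S × ℕ,
      {ρ : ℕ → S | 0 < P x.1 x.2.1 ∧ InfO ρ x.1 ∧ ∀ n ≥ x.2.2, ρ n ≠ x.2.1}) = 0 := by
    refine le_antisymm (le_trans (measure_iUnion_le _) ?_) zero_le
    have hx : ∀ x : S × S × ℕ,
        μ {ρ : ℕ → S | 0 < P x.1 x.2.1 ∧ InfO ρ x.1 ∧ ∀ n ≥ x.2.2, ρ n ≠ x.2.1} = 0 := by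
      rintro ⟨a, b, m⟩
      by_cases hab : 0 < P a b
      · refine le_antisymm (le_trans (measure_mono ?_)
          (le_of_eq (nn_null hnn hrow hMarkov a b m hab))) zero_le
        rintro ρ ⟨_, h2, h3⟩
        exact ⟨h2, h3⟩
      · have : {ρ : ℕ → S | 0 < P a b ∧ InfO ρ a ∧ ∀ n ≥ m, ρ n ≠ b} = ∅ := by
          ext ρ; simp [hab]
        simp only at this ⊢
        rw [this, measure_empty]
    simp [hx]
  have hTc : μ Tᶜ = 0 := by
    refine le_antisymm ?_ zero_le
    have hsubc : Tᶜ ⊆ {ρ : ℕ → S | ∃ n, ¬ 0 < P (ρ n) (ρ (n + 1))} ∪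
        ⋃ x : S × S × ℕ,
          {ρ : ℕ → S | 0 < P x.1 x.2.1 ∧ InfO ρ x.1 ∧ ∀ n ≥ x.2.2, ρ n ≠ x.2.1} := by
      intro ρ hρ
      rw [hT, Set.mem_compl_iff, Set.mem_setOf_eq] at hρ
      push_neg at hρ
      by_cases hA : ∀ n, 0 < P (ρ n) (ρ (n + 1))
      · obtain ⟨a, b, hab, hia, hib⟩ := hρ hA
        unfold InfO at hib
        push_neg at hib
        obtain ⟨M, hM⟩ := hib
        exact Or.inr (Set.mem_iUnion.mpr ⟨(a, b, M), hab, hia, hM⟩)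
      · push_neg at hA
        obtain ⟨n, hn⟩ := hA
        exact Or.inl ⟨n, not_lt.mpr hn⟩
    calc μ Tᶜ ≤ μ ({ρ : ℕ → S | ∃ n, ¬ 0 < P (ρ n) (ρ (n + 1))}) +
        μ (⋃ x : S × S × ℕ,
          {ρ : ℕ → S | 0 < P x.1 x.2.1 ∧ InfO ρ x.1 ∧ ∀ n ≥ x.2.2, ρ n ≠ x.2.1}) :=
          le_trans (measure_mono hsubc) (measure_union_le _ _)
      _ = 0 := by rw [hz, hU, add_zero]
  have hT1 : μ T = 1 := by
    have h1 : (1 : ENNReal) ≤ μ T + μ Tᶜ := by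
      rw [← measure_univ (μ := μ)]
      calc μ Set.univ ≤ μ (T ∪ Tᶜ) := measure_mono (by rw [Set.union_compl_self])
        _ ≤ μ T + μ Tᶜ := measure_union_le _ _
    rw [hTc, add_zero] at h1
    exact le_antisymm prob_le_one h1
  refine le_antisymm prob_le_one ?_
  rw [← hT1]
  exact measure_mono hsub
end

section
/- Let π be a finite path in a directed graph G (a sequence of vertices with consecutive pairs being edges). If π has a suffix κ such that the graph G_κ induced by the vertices and edges traversed by κ is a bottom SCC of the graph G_π induced by π, then the vertex set of κ is uniquely determined; i.e., any two such suffixes have the same set of vertices. -/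
/-- Edge relation of the graph traversed by a finite path (list of vertices):
`(a,b)` is an edge iff it is a pair of consecutive vertices of the list. -/
def ListAdj {V : Type*} (π : List V) (a b : V) : Prop := (a, b) ∈ π.zip π.tail

/-- Vertex set of a finite path. -/
def Vset {V : Type*} (π : List V) : Set V := {v | v ∈ π}

lemma listAdj_mono {V : Type*} {κ π : List V} (h : κ <:+ π) {a b : V}
    (hab : ListAdj κ a b) : ListAdj π a b := by
  obtain ⟨l, rfl⟩ := h
  induction l with
  | nil => exact hab
  | cons x l ih =>
    have h' : ListAdj (l ++ κ) a b := ih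
    unfold ListAdj at h' ⊢
    cases t : l ++ κ with
    | nil => simp [t] at h'
    | cons y t' =>
      rw [t] at h'
      simp only [List.cons_append]
      rw [t]
      simp only [List.tail_cons, List.zip_cons_cons]
      exact List.mem_cons_of_mem _ h'

lemma key {V : Type*} (π κ₁ κ₂ : List V)
    (h1 : κ₁ <:+ π ∧ IsBSCC (ListAdj π) (Vset κ₁) ∧ StronglyConn (ListAdj κ₁) (Vset κ₁))
    (h2 : κ₂ <:+ π ∧ IsBSCC (ListAdj π) (Vset κ₂) ∧ StronglyConn (ListAdj κ₂) (Vset κ₂))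
    (hsub : κ₂ <:+ κ₁) : Vset κ₁ = Vset κ₂ := by
  have hclosed2 := h2.2.1.2
  have hsc1 := h1.2.2.2
  have hVsub : Vset κ₂ ⊆ Vset κ₁ := fun v hv => hsub.subset hv
  apply Set.Subset.antisymm _ hVsub
  obtain ⟨s, hs⟩ : (Vset κ₂).Nonempty := h2.2.1.1.1.1
  intro t ht
  have hpath := hsc1 s (hVsub hs) t ht
  clear ht
  induction hpath with
  | refl => exact hs
  | tail _ hstep ih =>
    exact hclosed2 _ ih _ (listAdj_mono h1.1 hstep.1)

/-- If two suffixes `κ₁`, `κ₂` of a finite path `π` are such that their traversed graphs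
are bottom SCCs of the traversed graph of `π`, then they have the same vertex set:
the candidate `K(π)` is well defined. -/
theorem stmt6 {V : Type*} (π κ₁ κ₂ : List V)
    (h1 : κ₁ <:+ π ∧ IsBSCC (ListAdj π) (Vset κ₁) ∧ StronglyConn (ListAdj κ₁) (Vset κ₁))
    (h2 : κ₂ <:+ π ∧ IsBSCC (ListAdj π) (Vset κ₂) ∧ StronglyConn (ListAdj κ₂) (Vset κ₂)) :
    Vset κ₁ = Vset κ₂ := by
  rcases List.suffix_or_suffix_of_suffix h1.1 h2.1 with h | h
  · exact (key π κ₂ κ₁ h2 h1 h).symm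
  · exact key π κ₁ κ₂ h1 h2 h
end

section
/- For an infinite run ρ = s_0 s_1 s_2 ⋯ in a finite directed graph, if there exists N such that all states s_n for n ≥ N belong to a set B, every state of B appears infinitely often in ρ, and B is a bottom SCC of the graph, then for all sufficiently large m the candidate K(s_0 ⋯ s_m) equals B. -/
/-- `B` is the candidate of the finite path `π`: some suffix `κ` of `π` has vertex set `B`,
and its traversed graph is a bottom SCC of the traversed graph of `π`. -/
def IsCandidate {V : Type*} (π : List V) (B : Set V) : Prop :=
  ∃ κ : List V, κ <:+ π ∧ Vset κ = B ∧ IsBSCC (ListAdj π) B ∧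
    StronglyConn (ListAdj κ) (Vset κ)

/-- The prefix `s₀ ⋯ s_m` of a run, as a list. -/
def PrefList {V : Type*} (ρ : ℕ → V) (m : ℕ) : List V := (List.range (m + 1)).map ρ

lemma mem_zip_tail {α : Type*} {l : List α} {a b : α} :
    (a, b) ∈ l.zip l.tail ↔ ∃ i : ℕ, ∃ h : i + 1 < l.length,
      l[i]'(by omega) = a ∧ l[i+1] = b := by
  constructor
  · intro h
    rw [List.mem_iff_getElem] at h
    obtain ⟨i, hi, he⟩ := h
    have hl : i + 1 < l.length := by
      simp [List.length_zip, List.length_tail] at hi; omega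
    refine ⟨i, hl, ?_, ?_⟩
    · have := List.getElem_zip (l := l) (l' := l.tail) (i := i) (h := hi)
      rw [this] at he
      have := congrArg Prod.fst he
      simpa using this
    · have := List.getElem_zip (l := l) (l' := l.tail) (i := i) (h := hi)
      rw [this] at he
      have h2 := congrArg Prod.snd he
      simp at h2
      exact h2
  · rintro ⟨i, hl, ha, hb⟩
    rw [List.mem_iff_getElem]
    have hi : i < (l.zip l.tail).length := by
      simp [List.length_zip, List.length_tail]; omega
    refine ⟨i, hi, ?_⟩
    rw [List.getElem_zip]
    simp [List.getElem_tail, ha, hb]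

lemma listAdj_map_range {V : Type*} (f : ℕ → V) (n : ℕ) (a b : V) :
    ListAdj ((List.range n).map f) a b ↔ ∃ i, i + 1 < n ∧ f i = a ∧ f (i+1) = b := by
  unfold ListAdj
  rw [mem_zip_tail]
  constructor
  · rintro ⟨i, h, ha, hb⟩
    simp at h
    refine ⟨i, h, ?_, ?_⟩ <;> simp_all
  · rintro ⟨i, h, ha, hb⟩
    refine ⟨i, by simpa using h, ?_, ?_⟩ <;> simp_all

lemma drop_map_range {V : Type*} (f : ℕ → V) (n N : ℕ) :
    ((List.range n).map f).drop N = (List.range (n - N)).map (fun i => f (N + i)) := by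
  apply List.ext_getElem
  · simp
  · intro i h1 h2
    simp_all [Nat.add_comm]

lemma walk_rtg {V : Type*} (r : V → V → Prop) (ρ : ℕ → V) (i j : ℕ) (hij : i ≤ j)
    (hstep : ∀ k, i ≤ k → k < j → r (ρ k) (ρ (k+1))) :
    Relation.ReflTransGen r (ρ i) (ρ j) := by
  induction j, hij using Nat.le_induction with
  | base => exact .refl
  | succ n hn ih =>
    exact (ih (fun k hk hk2 => hstep k hk (by omega))).tail (hstep n hn (by omega))

/-- If a run of a finite directed graph eventually stays in a bottom SCC `B` and visits
every state of `B` infinitely often, then for all sufficiently large `m` the candidate of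
the prefix `s₀ ⋯ s_m` equals `B`. -/
theorem stmt7 {V : Type*} [Fintype V] (adj : V → V → Prop) (ρ : ℕ → V)
    (hpath : ∀ n, adj (ρ n) (ρ (n + 1)))
    (B : Set V) (hB : IsBSCC adj B)
    (N : ℕ) (htrap : ∀ n ≥ N, ρ n ∈ B)
    (hio : ∀ s ∈ B, ∀ m : ℕ, ∃ n ≥ m, ρ n = s) :
    ∃ M : ℕ, ∀ m ≥ M, IsCandidate (PrefList ρ m) B := by
  classical
  obtain ⟨s₀, hs₀⟩ := hB.1.1.1
  -- occurrence function: F s k is an index ≥ k where ρ hits s (when s ∈ B)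
  set F : V → ℕ → ℕ := fun s k => if h : s ∈ B then (hio s h k).choose else k with hF
  have hFge : ∀ s k, k ≤ F s k := by
    intro s k
    by_cases h : s ∈ B
    · simp only [hF, dif_pos h]
      exact (hio s h k).choose_spec.1
    · simp [hF, dif_neg h]
  have hFeq : ∀ s ∈ B, ∀ k, ρ (F s k) = s := by
    intro s h k
    simp only [hF, dif_pos h]
    exact (hio s h k).choose_spec.2
  set M₁ : ℕ := Finset.univ.sup (fun s => F s N) with hM₁
  set M₂ : ℕ := Finset.univ.sup (fun s => F s M₁) with hM₂
  have hle1 : ∀ s, F s N ≤ M₁ := by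
    intro s; rw [hM₁]; exact Finset.le_sup (f := fun s => F s N) (Finset.mem_univ s)
  have hle2 : ∀ s, F s M₁ ≤ M₂ := by
    intro s; rw [hM₂]; exact Finset.le_sup (f := fun s => F s M₁) (Finset.mem_univ s)
  have hNM₁ : N ≤ M₁ := le_trans (hFge s₀ N) (hle1 s₀)
  have hM₁M₂ : M₁ ≤ M₂ := le_trans (hFge s₀ M₁) (hle2 s₀)
  refine ⟨M₂, fun m hm => ?_⟩
  have hNm : N ≤ m := le_trans (le_trans hNM₁ hM₁M₂) hm
  set π : List V := PrefList ρ m with hπ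
  set κ : List V := π.drop N with hκ
  have hκeq : κ = (List.range (m + 1 - N)).map (fun i => ρ (N + i)) := by
    rw [hκ, hπ, PrefList, drop_map_range]
  -- membership in π gives adjacency facts
  have hadjπ : ∀ a b, ListAdj π a b ↔ ∃ i, i + 1 < m + 1 ∧ ρ i = a ∧ ρ (i+1) = b := by
    intro a b; rw [hπ, PrefList]; exact listAdj_map_range ρ (m+1) a b
  have hVκ : Vset κ = B := by
    ext v
    simp only [Vset, Set.mem_setOf_eq, hκeq, List.mem_map, List.mem_range]
    constructor
    · rintro ⟨i, hi, rfl⟩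
      exact htrap (N + i) (by omega)
    · intro hv
      refine ⟨F v N - N, ?_, ?_⟩
      · have := hFge v N; have := hle1 v; omega
      · have h1 : N + (F v N - N) = F v N := by have := hFge v N; omega
        rw [h1]; exact hFeq v hv N
  -- path from ρ i to ρ j inside B, within π
  have hwalkπ : ∀ i j, N ≤ i → i ≤ j → j ≤ m →
      Relation.ReflTransGen (fun a b => ListAdj π a b ∧ a ∈ B ∧ b ∈ B) (ρ i) (ρ j) := by
    intro i j hNi hij hjm
    apply walk_rtg
    · exact hij
    · intro k hk hk2
      refine ⟨(hadjπ _ _).2 ⟨k, by omega, rfl, rfl⟩, htrap k (by omega), htrap (k+1) (by omega)⟩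
  have hwalkκ : ∀ i j, N ≤ i → i ≤ j → j ≤ m →
      Relation.ReflTransGen (fun a b => ListAdj κ a b ∧ a ∈ B ∧ b ∈ B) (ρ i) (ρ j) := by
    intro i j hNi hij hjm
    apply walk_rtg
    · exact hij
    · intro k hk hk2
      refine ⟨?_, htrap k (by omega), htrap (k+1) (by omega)⟩
      rw [hκeq, listAdj_map_range]
      refine ⟨k - N, by omega, ?_, ?_⟩
      · congr 1; omega
      · congr 1; omega
  -- connecting any s, t ∈ B
  have hconn : ∀ r : V → V → Prop,
      (∀ i j, N ≤ i → i ≤ j → j ≤ m →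
        Relation.ReflTransGen (fun a b => r a b ∧ a ∈ B ∧ b ∈ B) (ρ i) (ρ j)) →
      ∀ s ∈ B, ∀ t ∈ B,
        Relation.ReflTransGen (fun a b => r a b ∧ a ∈ B ∧ b ∈ B) s t := by
    intro r hw s hs t ht
    have h1 : ρ (F s N) = s := hFeq s hs N
    have h2 : ρ (F t M₁) = t := hFeq t ht M₁
    have := hw (F s N) (F t M₁) (hFge s N)
      (le_trans (hle1 s) (hFge t M₁)) (le_trans (hle2 t) hm)
    rwa [h1, h2] at this
  refine ⟨κ, List.drop_suffix N π, hVκ, ⟨⟨⟨⟨s₀, hs₀⟩, hconn _ hwalkπ⟩, ?_⟩, ?_⟩, ?_⟩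
  · -- maximality
    intro K' hBK' hK'
    apply hB.1.2 K' hBK'
    refine ⟨hK'.1, fun s hs t ht => ?_⟩
    refine Relation.ReflTransGen.mono ?_ s t (hK'.2 s hs t ht)
    rintro a b ⟨hab, ha, hb⟩
    obtain ⟨i, hi, rfl, rfl⟩ := (hadjπ a b).1 hab
    exact ⟨hpath i, ha, hb⟩
  · -- bottom
    intro s hs t hst
    obtain ⟨i, hi, rfl, rfl⟩ := (hadjπ s t).1 hst
    exact hB.2 _ hs _ (hpath i)
  · -- strongly connected κ
    rw [hVκ]
    exact ⟨⟨s₀, hs₀⟩, hconn _ hwalkκ⟩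
end

section
/- Let π be a finite path in a directed graph and let π' = π·v be its extension by one vertex v already visited by π. If the discovery index of v is at least that of the last vertex of π, then the strongly connected components of G_{π'} coincide with those of G_π together with possibly merged components; specifically, if the last vertex u of π satisfies d_π(u) ≤ d_π(v), then SCCs of G_{π'} equal SCCs of G_π. -/
/-- Discovery index of a vertex `s` along a path `π`: the number of distinct vertices
appearing in the shortest prefix of `π` ending at the first occurrence of `s`. -/
def DIdx {V : Type*} [DecidableEq V] (π : List V) (s : V) : ℕ :=
  ((π.take (π.idxOf s + 1)).toFinset).card

/-- `a` and `b` lie in the same SCC of the graph with edge relation `r`. -/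
def SameSCC {V : Type*} (r : V → V → Prop) (a b : V) : Prop :=
  Relation.ReflTransGen r a b ∧ Relation.ReflTransGen r b a

lemma listAdj_iff {V : Type*} (π : List V) (a b : V) :
    ListAdj π a b ↔ ∃ i, ∃ h : i + 1 < π.length, π[i] = a ∧ π[i+1] = b := by
  unfold ListAdj
  rw [List.mem_iff_getElem]
  constructor
  · rintro ⟨i, hi, hget⟩
    have hl : (π.zip π.tail).length = min π.length π.tail.length := List.length_zip
    rw [List.getElem_zip] at hget
    have h1 : i + 1 < π.length := by
      have := hi; rw [hl, List.length_tail] at this; omega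
    exact ⟨i, h1, (Prod.mk.injEq _ _ _ _ ▸ hget).1, by
      have := (Prod.mk.injEq _ _ _ _ ▸ hget).2
      rwa [List.getElem_tail] at this⟩
  · rintro ⟨i, h, ha, hb⟩
    refine ⟨i, ?_, ?_⟩
    · rw [List.length_zip, List.length_tail]; omega
    · rw [List.getElem_zip, List.getElem_tail]; exact Prod.ext ha hb

lemma reach_aux {V : Type*} (π : List V) (i j : ℕ) (hij : i ≤ j) (hj : j < π.length) :
    Relation.ReflTransGen (ListAdj π) π[i] π[j] := by
  induction j, hij using Nat.le_induction with
  | base => exact .refl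
  | succ j hij ih =>
    have hj' : j < π.length := by omega
    exact .tail (ih hj') ((listAdj_iff π _ _).mpr ⟨j, hj, rfl, rfl⟩)

lemma indexOf_le_of_getElem {V : Type*} [DecidableEq V] {l : List V} {a : V} {i : ℕ}
    (h : i < l.length) (ha : l[i] = a) : l.idxOf a ≤ i := by
  induction l generalizing i with
  | nil => simp at h
  | cons x xs ih =>
    cases i with
    | zero => simp only [List.getElem_cons_zero] at ha; simp [ha]
    | succ n =>
      by_cases hx : x = a
      · simp [hx]
      · rw [List.idxOf_cons_ne _ hx]
        simp only [List.getElem_cons_succ] at ha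
        exact Nat.succ_le_succ (ih (by simpa using Nat.lt_of_succ_lt_succ h) ha)

lemma indexOf_mono {V : Type*} [DecidableEq V] (π : List V) (u w : V)
    (hu : u ∈ π) (hd : DIdx π u ≤ DIdx π w) :
    π.idxOf u ≤ π.idxOf w := by
  by_contra h
  push_neg at h
  have hul : π.idxOf u < π.length := List.idxOf_lt_length_iff.mpr hu
  have hlt : DIdx π w < DIdx π u := by
    apply Finset.card_lt_card
    constructor
    · exact fun x hx => List.mem_toFinset.mpr
        (((List.take_isPrefix_take (l := π)).mpr (Or.inl (by omega))).subset
          (List.mem_toFinset.mp hx))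
    · intro hsub2
      have hu' : u ∈ (π.take (π.idxOf u + 1)).toFinset := by
        rw [List.mem_toFinset, List.mem_take_iff_getElem]
        exact ⟨π.idxOf u, by omega, List.getElem_idxOf hul⟩
      have := hsub2 hu'
      rw [List.mem_toFinset, List.mem_take_iff_getElem] at this
      obtain ⟨i, hi, hiu⟩ := this
      have : π.idxOf u ≤ i := indexOf_le_of_getElem (by omega) hiu
      omega
  omega

/-- Extending a path `π` by an already-visited vertex `v` whose discovery index is at
least that of the last vertex `u` of `π` does not change the SCC partition of the
traversed graph. -/
theorem stmt17 {V : Type*} [DecidableEq V] (adj : V → V → Prop)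
    (π : List V) (hne : π ≠ []) (v : V) (hv : v ∈ π)
    (hpath : π.Chain' adj) (hedge : adj (π.getLast hne) v)
    (hd : DIdx π (π.getLast hne) ≤ DIdx π v) :
    ∀ a b : V, SameSCC (ListAdj (π ++ [v])) a b ↔ SameSCC (ListAdj π) a b := by
  set u := π.getLast hne with hu
  have hul : u ∈ π := List.getLast_mem hne
  have hπ : 0 < π.length := List.length_pos_iff.mpr hne
  -- key: u → v already in G_π
  have hidx := indexOf_mono π u v hul hd
  have hvl : π.idxOf v < π.length := List.idxOf_lt_length_iff.mpr hv
  have key : Relation.ReflTransGen (ListAdj π) u v := by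
    have := reach_aux π (π.idxOf u) (π.idxOf v) hidx hvl
    rwa [List.getElem_idxOf (List.idxOf_lt_length_iff.mpr hul),
      List.getElem_idxOf hvl] at this
  -- old edges lift to the extended path
  have hmono : ∀ a b, ListAdj π a b → ListAdj (π ++ [v]) a b := by
    intro a b hab
    obtain ⟨i, hi, ha, hb⟩ := (listAdj_iff π a b).mp hab
    refine (listAdj_iff _ a b).mpr ⟨i, ?_, ?_, ?_⟩
    · simp; omega
    · rw [List.getElem_append_left (by omega)]; exact ha
    · rw [List.getElem_append_left hi]; exact hb
  -- decompose edges of the extended path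
  have hdec : ∀ a b, ListAdj (π ++ [v]) a b → ListAdj π a b ∨ (a = u ∧ b = v) := by
    intro a b hab
    obtain ⟨i, hi, ha, hb⟩ := (listAdj_iff _ a b).mp hab
    simp only [List.length_append, List.length_singleton] at hi
    rcases Nat.lt_or_ge (i + 1) π.length with h1 | h1
    · left
      refine (listAdj_iff π a b).mpr ⟨i, h1, ?_, ?_⟩
      · rw [List.getElem_append_left (by omega)] at ha; exact ha
      · rw [List.getElem_append_left h1] at hb; exact hb
    · right
      have hieq : i + 1 = π.length := by omega
      constructor
      · rw [List.getElem_append_left (by omega)] at ha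
        rw [hu, List.getLast_eq_getElem]
        rw [← ha]; congr 1; omega
      · rw [← hb, List.getElem_append_right (by omega)]
        simp [hieq]
  -- closures coincide
  have hclos : ∀ a b, Relation.ReflTransGen (ListAdj (π ++ [v])) a b →
      Relation.ReflTransGen (ListAdj π) a b := by
    intro a b hab
    induction hab with
    | refl => exact .refl
    | tail _ hcd ih =>
      rcases hdec _ _ hcd with h | ⟨rfl, rfl⟩
      · exact .tail ih h
      · exact ih.trans key
  intro a b
  constructor
  · rintro ⟨h1, h2⟩; exact ⟨hclos _ _ h1, hclos _ _ h2⟩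
  · rintro ⟨h1, h2⟩
    exact ⟨Relation.ReflTransGen.mono hmono _ _ h1, Relation.ReflTransGen.mono hmono _ _ h2⟩
end
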